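/- For any connected simple graph G on n ≥ 2 vertices, the tree cover number satisfies T(G) ≤ ⌈n/2⌉. -/

import Mathlib

open SimpleGraph

/-- A tree cover of `G`: vertex-disjoint induced subtrees covering all vertices. -/
def IsTreeCover {V : Type} (G : SimpleGraph V) (C : Finset (Set V)) : Prop :=
  (∀ s ∈ C, (G.induce s).IsTree) ∧ (∀ v : V, ∃ s ∈ C, v ∈ s) ∧
    (C : Set (Set V)).PairwiseDisjoint id

/-- The tree cover number: minimum cardinality of a tree cover. -/
noncomputable def treeCoverNumber {V : Type} (G : SimpleGraph V) : ℕ :=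
  sInf {n | ∃ C : Finset (Set V), IsTreeCover G C ∧ C.card = n}

section Aux

variable {V : Type} {G : SimpleGraph V}

/-- A graph in which every edge is incident to a fixed vertex `u` is acyclic. -/
lemma aux_star_isAcyclic {u : V} (h : ∀ a b : V, G.Adj a b → a = u ∨ b = u) :
    G.IsAcyclic := by
  intro v c hc
  have h3 := hc.three_le_length
  cases c with
  | nil => simp at h3
  | cons h1 p =>
    rename_i a
    cases p with
    | nil => simp at h3
    | cons h2 q =>
      rename_i b
      -- tail of support of the cycle is `a :: q.support` (with q : Walk b v)
      have hnd : (a :: q.support).Nodup := by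
        have hnd0 := hc.support_nodup
        rw [SimpleGraph.Walk.support_cons, List.tail_cons,
          SimpleGraph.Walk.support_cons] at hnd0
        exact hnd0
      have haq : a ∉ q.support := (List.nodup_cons.mp hnd).1
      have hqnd : q.support.Nodup := (List.nodup_cons.mp hnd).2
      have hbq : b ∈ q.support := q.start_mem_support
      have hvq : v ∈ q.support := q.end_mem_support
      have hab : a ≠ b := fun hh => haq (hh ▸ hbq)
      have hav : a ≠ v := fun hh => haq (hh ▸ hvq)
      by_cases hau : a = u
      · -- center is second vertex
        cases q with
        | nil =>
          -- cycle has length 2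
          simp [SimpleGraph.Walk.length_cons] at h3
        | cons h4 q' =>
          rename_i c'
          have hor : b = u ∨ c' = u := h _ _ h4
          rcases hor with hbu | hcu
          · exact hab (hau.trans hbu.symm)
          · -- c' = u = a, but c' ∈ q.support while a ∉ q.support
            have hc'q : c' ∈ (SimpleGraph.Walk.cons h4 q').support := by
              rw [SimpleGraph.Walk.support_cons]
              exact List.mem_cons_of_mem _ q'.start_mem_support
            have hac' : a = c' := hau.trans hcu.symm
            exact haq (hac' ▸ hc'q)
      · -- a ≠ u, so v = u (from edge v-a) and b = u (from edge a-b), hence b = v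
        have hvu : v = u := by
          rcases h _ _ h1 with hh | hh
          · exact hh
          · exact absurd hh hau
        have hbu : b = u := by
          rcases h _ _ h2 with hh | hh
          · exact absurd hh hau
          · exact hh
        have hbv : b = v := hbu.trans hvu.symm
        cases q with
        | nil => simp [SimpleGraph.Walk.length_cons] at h3
        | cons h4 q' =>
          rename_i c'
          -- support of q is b :: q'.support, contains v = b twice
          have hvq' : v ∈ q'.support := q'.end_mem_support
          have hbq' : b ∉ q'.support := by
            rw [SimpleGraph.Walk.support_cons] at hqnd
            exact (List.nodup_cons.mp hqnd).1
          exact hbq' (hbv ▸ hvq')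

/-- An induced star is a tree. -/
lemma aux_star_isTree {u : V} {L : Set V} (huL : u ∉ L)
    (hadj : ∀ z ∈ L, G.Adj u z) (hindep : ∀ a ∈ L, ∀ b ∈ L, ¬ G.Adj a b) :
    (G.induce (insert u L)).IsTree := by
  constructor
  · -- connected
    have hu : u ∈ insert u L := Set.mem_insert _ _
    rw [SimpleGraph.connected_iff]
    refine ⟨fun a b => ?_, ⟨⟨u, hu⟩⟩⟩
    have key : ∀ w : ↥(insert u L), (G.induce (insert u L)).Reachable w ⟨u, hu⟩ := by
      rintro ⟨w, hw⟩
      rcases Set.mem_insert_iff.mp hw with hw' | hw'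
      · subst hw'; rfl
      · have hA : (G.induce (insert u L)).Adj ⟨w, hw⟩ ⟨u, hu⟩ := by
          simp only [comap_adj]
          exact (hadj w hw').symm
        exact hA.reachable
    exact (key a).trans (key b).symm
  · -- acyclic
    apply aux_star_isAcyclic (u := ⟨u, Set.mem_insert _ _⟩)
    rintro ⟨a, ha⟩ ⟨b, hb⟩ hab
    have hab' : G.Adj a b := hab
    rcases Set.mem_insert_iff.mp ha with ha' | ha'
    · left; exact Subtype.ext ha'
    · rcases Set.mem_insert_iff.mp hb with hb' | hb'
      · right; exact Subtype.ext hb'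
      · exact absurd hab' (hindep a ha' b hb')

/-- Transfer a tree structure through the canonical isomorphism between an induced
subgraph of an induced subgraph and the corresponding induced subgraph. -/
lemma aux_isTree_image {R : Set V} {t : Set ↥R}
    (h : ((G.induce R).induce t).IsTree) : (G.induce (Subtype.val '' t)).IsTree := by
  let e : ↥t ≃ ↥(Subtype.val '' t) := Equiv.Set.image Subtype.val t Subtype.val_injective
  let φ : ((G.induce R).induce t) ≃g (G.induce (Subtype.val '' t)) :=
    { toEquiv := e, map_rel_iff' := Iff.rfl }
  constructor
  · exact φ.connected_iff.mp h.isConnected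
  · intro v c hc
    have hinj : Function.Injective φ.symm.toHom := φ.symm.toEquiv.injective
    exact h.IsAcyclic (c.map φ.symm.toHom) (hc.map hinj)

/-- If every non-root vertex of `R` has a neighbor in `R` strictly closer to the root,
then the induced graph on `R` is connected. -/
lemma aux_induce_connected {R : Set V} {r : V} (hr : r ∈ R)
    (H : ∀ z ∈ R, z ≠ r → ∃ w, w ∈ R ∧ G.Adj w z ∧ G.dist r w < G.dist r z) :
    (G.induce R).Connected := by
  have key : ∀ n : ℕ, ∀ z, ∀ hz : z ∈ R, G.dist r z ≤ n →
      (G.induce R).Reachable ⟨z, hz⟩ ⟨r, hr⟩ := by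
    intro n
    induction n with
    | zero =>
      intro z hz h0
      by_cases hzr : z = r
      · subst hzr; rfl
      · obtain ⟨w, _, _, hlt⟩ := H z hz hzr
        omega
    | succ n ih =>
      intro z hz hle
      by_cases hzr : z = r
      · subst hzr; rfl
      · obtain ⟨w, hw, hadj, hlt⟩ := H z hz hzr
        have hreach := ih w hw (by omega)
        have hA : (G.induce R).Adj ⟨z, hz⟩ ⟨w, hw⟩ := by
          simp only [comap_adj]; exact hadj.symm
        exact hA.reachable.trans hreach
  rw [SimpleGraph.connected_iff]
  refine ⟨fun a b => ?_, ⟨⟨r, hr⟩⟩⟩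
  exact ((key _ a.1 a.2 le_rfl).trans (key _ b.1 b.2 le_rfl).symm)

/-- Each non-root vertex has a predecessor. -/
lemma aux_exists_pred (hG : G.Connected) {r z : V} (hz : z ≠ r) :
    ∃ w, G.Adj w z ∧ G.dist r w + 1 = G.dist r z := by
  have hne : G.dist r z ≠ 0 := by
    intro h0
    exact hz ((hG.dist_eq_zero_iff.mp h0).symm)
  obtain ⟨p, hp⟩ := hG.exists_walk_length_eq_dist r z
  have hlen : p.reverse.length = G.dist r z := by simpa using hp
  cases hq : p.reverse with
  | nil => rw [hq] at hlen; simp at hlen hne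
  | cons h4 q' =>
    rename_i w
    rw [hq] at hlen
    simp only [SimpleGraph.Walk.length_cons] at hlen
    have hw1 : G.dist r w ≤ G.dist r z - 1 := by
      have hd := SimpleGraph.dist_le q'.reverse
      simp only [SimpleGraph.Walk.length_reverse] at hd
      omega
    have hw2 : G.dist r z ≤ G.dist r w + 1 := by
      have htri := hG.dist_triangle (u := r) (v := w) (w := z)
      have hwz : G.dist w z ≤ 1 := by
        have hd := SimpleGraph.dist_le (SimpleGraph.Walk.cons h4.symm SimpleGraph.Walk.nil)
        simpa using hd
      omega
    exact ⟨w, h4.symm, by omega⟩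

/-- The induction step: strip off an induced star whose complement stays connected. -/
lemma aux_strip_step [Fintype V] {r u : V} {L : Set V} {n : ℕ}
    (hcard : Fintype.card V ≤ n + 1)
    (hLne : L.Nonempty) (huL : u ∉ L)
    (hadj : ∀ z ∈ L, G.Adj u z)
    (hindep : ∀ a ∈ L, ∀ b ∈ L, ¬ G.Adj a b)
    (hP : ∀ z, z ∉ insert u L → z ≠ r →
       ∃ w, w ∉ insert u L ∧ G.Adj w z ∧ G.dist r w < G.dist r z)
    (hr : ((insert u L : Set V)ᶜ).Nonempty → r ∉ insert u L)
    (IH : ∀ (W : Type) [Fintype W] (H : SimpleGraph W), Fintype.card W ≤ n → H.Connected →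
        ∃ C : Finset (Set W), IsTreeCover H C ∧ 2 * C.card ≤ Fintype.card W + 1) :
    ∃ C : Finset (Set V), IsTreeCover G C ∧ 2 * C.card ≤ Fintype.card V + 1 := by
  classical
  set S : Set V := insert u L with hS
  have hStree : (G.induce S).IsTree := aux_star_isTree huL hadj hindep
  by_cases hRe : Sᶜ = ∅
  · -- the star covers everything
    refine ⟨{S}, ⟨?_, ?_, ?_⟩, ?_⟩
    · intro s hs
      rw [Finset.mem_singleton] at hs
      subst hs; exact hStree
    · intro v
      refine ⟨S, Finset.mem_singleton_self _, ?_⟩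
      by_contra hv
      have hv' : v ∈ Sᶜ := hv
      rw [hRe] at hv'
      exact hv'
    · simp
    · have h1 : 1 ≤ Fintype.card V := Fintype.card_pos_iff.mpr ⟨u⟩
      simp only [Finset.card_singleton]
      omega
  · have hRne : (Sᶜ).Nonempty := Set.nonempty_iff_ne_empty.mpr hRe
    have hrS : r ∉ S := hr hRne
    have hrR : r ∈ Sᶜ := hrS
    have hconn : (G.induce Sᶜ).Connected := by
      apply aux_induce_connected hrR
      intro z hz hzr
      obtain ⟨w, hw, hadjw, hlt⟩ := hP z hz hzr
      exact ⟨w, hw, hadjw, hlt⟩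
    -- cardinalities
    obtain ⟨y, hy⟩ := hLne
    have hSu : u ∈ S := Set.mem_insert _ _
    have hSy : y ∈ S := Set.mem_insert_of_mem _ hy
    have hS2 : 2 ≤ Fintype.card ↥S := by
      rw [Nat.succ_le_iff, Fintype.one_lt_card_iff]
      refine ⟨⟨u, hSu⟩, ⟨y, hSy⟩, ?_⟩
      intro hh
      have hh' : u = y := congrArg Subtype.val hh
      exact huL (hh' ▸ hy)
    have hSle : Fintype.card ↥S ≤ Fintype.card V :=
      Fintype.card_le_of_injective _ Subtype.val_injective
    have hcompl : Fintype.card ↥(Sᶜ) = Fintype.card V - Fintype.card ↥S :=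
      Fintype.card_compl_set S
    obtain ⟨C', ⟨hTrees', hCov', hDisj'⟩, hcard'⟩ :=
      IH ↥(Sᶜ) (G.induce Sᶜ) (by omega) hconn
    set push : Set ↥(Sᶜ) → Set V := fun t => Subtype.val '' t with hpush
    refine ⟨insert S (C'.image push), ⟨?_, ?_, ?_⟩, ?_⟩
    · intro s hs
      rw [Finset.mem_insert] at hs
      rcases hs with hs | hs
      · subst hs; exact hStree
      · obtain ⟨t₀, ht₀, rfl⟩ := Finset.mem_image.mp hs
        exact aux_isTree_image (hTrees' t₀ ht₀)
    · intro v
      by_cases hv : v ∈ S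
      · exact ⟨S, Finset.mem_insert_self _ _, hv⟩
      · obtain ⟨t₀, ht₀, hm⟩ := hCov' ⟨v, hv⟩
        refine ⟨push t₀, Finset.mem_insert_of_mem (Finset.mem_image_of_mem _ ht₀), ?_⟩
        exact ⟨⟨v, hv⟩, hm, rfl⟩
    · intro a ha b hb hab
      simp only [Finset.coe_insert, Set.mem_insert_iff, Finset.mem_coe,
        Finset.mem_image] at ha hb
      have himage_sub : ∀ t : Set ↥(Sᶜ), push t ⊆ Sᶜ := by
        rintro t x ⟨x₀, _, rfl⟩
        exact x₀.2
      rcases ha with rfl | ⟨t₀, ht₀, rfl⟩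
      · rcases hb with rfl | ⟨t₁, ht₁, rfl⟩
        · exact absurd rfl hab
        · exact Set.disjoint_right.mpr fun {x} hx => himage_sub t₁ hx
      · rcases hb with rfl | ⟨t₁, ht₁, rfl⟩
        · exact Set.disjoint_left.mpr fun {x} hx => himage_sub t₀ hx
        · have hne : t₀ ≠ t₁ := by
            rintro rfl; exact hab rfl
          have hdisj := hDisj' (Finset.mem_coe.mpr ht₀) (Finset.mem_coe.mpr ht₁) hne
          exact (Set.disjoint_image_iff Subtype.val_injective).mpr hdisj
    · have h1 : (insert S (C'.image push)).card ≤ C'.card + 1 := by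
        calc (insert S (C'.image push)).card ≤ (C'.image push).card + 1 :=
              Finset.card_insert_le _ _
          _ ≤ C'.card + 1 := by
              have h2 := Finset.card_image_le (s := C') (f := push)
              omega
      omega

end Aux

lemma aux_main : ∀ (n : ℕ) (V : Type) [Fintype V] (G : SimpleGraph V),
    Fintype.card V ≤ n → G.Connected →
    ∃ C : Finset (Set V), IsTreeCover G C ∧ 2 * C.card ≤ Fintype.card V + 1 := by
  intro n
  induction n with
  | zero =>
    intro V _ G hcard hG
    obtain ⟨v⟩ := hG.nonempty
    have h0 : 0 < Fintype.card V := Fintype.card_pos_iff.mpr ⟨v⟩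
    omega
  | succ n ih =>
    intro V _ G hcard hG
    classical
    obtain ⟨r⟩ := hG.nonempty
    set D : ℕ := Finset.univ.sup (fun v => G.dist r v) with hD
    have hub : ∀ v, G.dist r v ≤ D := fun v => Finset.le_sup (Finset.mem_univ v)
    obtain ⟨x, -, hxD⟩ := Finset.exists_mem_eq_sup Finset.univ
      ⟨r, Finset.mem_univ r⟩ (fun v => G.dist r v)
    rw [← hD] at hxD
    by_cases hD0 : D = 0
    · -- single vertex
      have hall : ∀ v : V, v = r := by
        intro v
        have hv0 : G.dist r v = 0 := by have := hub v; omega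
        exact (hG.dist_eq_zero_iff.mp hv0).symm
      refine ⟨{(Set.univ : Set V)}, ⟨?_, ?_, ?_⟩, ?_⟩
      · intro s hs
        rw [Finset.mem_singleton] at hs
        subst hs
        constructor
        · rw [SimpleGraph.connected_iff]
          refine ⟨fun a b => ?_, ⟨⟨r, trivial⟩⟩⟩
          have hab : a = b := Subtype.ext ((hall a.1).trans (hall b.1).symm)
          rw [hab]
        · intro v c hc
          cases c with
          | nil => exact hc.ne_nil rfl
          | cons h p =>
            rename_i w
            have hvw : v = w := Subtype.ext ((hall v.1).trans (hall w.1).symm)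
            exact (G.induce Set.univ).irrefl (hvw ▸ h)
      · intro v; exact ⟨Set.univ, Finset.mem_singleton_self _, trivial⟩
      · simp
      · have h1 : 1 ≤ Fintype.card V := Fintype.card_pos_iff.mpr ⟨r⟩
        simp only [Finset.card_singleton]
        omega
    · -- D ≥ 1
      have hxr : x ≠ r := by
        intro h
        rw [h] at hxD
        simp [SimpleGraph.dist_self] at hxD
        omega
      by_cases hA : ∃ a b : V, G.dist r a = D ∧ G.dist r b = D ∧ G.Adj a b
      · -- two adjacent vertices at maximal distance: strip that edge
        obtain ⟨a, b, haD, hbD, hab⟩ := hA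
        apply aux_strip_step (r := r) (u := a) (L := {b}) (n := n) hcard
          ⟨b, rfl⟩ (fun h => hab.ne (Set.mem_singleton_iff.mp h))
          (by intro z hz; rw [Set.mem_singleton_iff] at hz; exact hz ▸ hab)
          (by intro p hp q hq
              rw [Set.mem_singleton_iff] at hp hq
              subst hp; subst hq; exact G.irrefl)
          ?_ ?_ ih
        · intro z hz hzr
          obtain ⟨w, hwz, hwd⟩ := aux_exists_pred hG hzr
          refine ⟨w, ?_, hwz, by omega⟩
          intro hw
          have hzD : G.dist r z ≤ D := hub z
          rcases Set.mem_insert_iff.mp hw with hw' | hw'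
          · subst hw'; omega
          · rw [Set.mem_singleton_iff] at hw'; subst hw'; omega
        · intro _ hmem
          rcases Set.mem_insert_iff.mp hmem with h | h
          · rw [← h] at haD
            simp [SimpleGraph.dist_self] at haD
            omega
          · rw [Set.mem_singleton_iff] at h
            rw [← h] at hbD
            simp [SimpleGraph.dist_self] at hbD
            omega
      · -- no two adjacent max-distance vertices: strip a star
        push_neg at hA
        obtain ⟨u, hux, huD⟩ := aux_exists_pred hG hxr
        have huD' : G.dist r u + 1 = D := by rw [hxD]; exact huD
        apply aux_strip_step (r := r) (u := u)
          (L := {z | G.Adj u z ∧ G.dist r z = D}) (n := n) hcard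
          ⟨x, hux, hxD.symm⟩
          (fun h => G.irrefl h.1)
          (fun z hz => hz.1)
          (fun p hp q hq => hA p q hp.2 hq.2)
          ?_ ?_ ih
        · intro z hz hzr
          obtain ⟨w, hwz, hwd⟩ := aux_exists_pred hG hzr
          refine ⟨w, ?_, hwz, by omega⟩
          intro hw
          have hzD : G.dist r z ≤ D := hub z
          rcases Set.mem_insert_iff.mp hw with hw' | hw'
          · -- w = u: then z is a max-distance neighbor of u, so z ∈ L
            have hzDeq : G.dist r z = D := by
              rw [hw'] at hwd
              omega
            refine hz (Set.mem_insert_of_mem _ ?_)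
            exact ⟨hw' ▸ hwz, hzDeq⟩
          · -- w ∈ L: dist r w = D, contradiction
            have hwD : G.dist r w = D := hw'.2
            omega
        · intro hne hmem
          rcases Set.mem_insert_iff.mp hmem with h | h
          · -- r = u : then D = 1 and the complement is nonempty gives a contradiction
            have hu0 : G.dist r u = 0 := by rw [← h]; simp [SimpleGraph.dist_self]
            have hD1 : D = 1 := by omega
            obtain ⟨z₀, hz₀⟩ := hne
            have hz₀u : z₀ ≠ u := fun hh => hz₀ (hh ▸ Set.mem_insert _ _)
            have hz₀r : z₀ ≠ r := fun hh => hz₀u (hh.trans h)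
            have hz₀d : G.dist r z₀ = 1 := by
              have h1 := hub z₀
              have h2 : G.dist r z₀ ≠ 0 := by
                intro h0
                exact hz₀r (hG.dist_eq_zero_iff.mp h0).symm
              omega
            have hadjr : G.Adj r z₀ := SimpleGraph.dist_eq_one_iff_adj.mp hz₀d
            refine hz₀ (Set.mem_insert_of_mem _ ?_)
            exact ⟨h ▸ hadjr, by omega⟩
          · have hr0 : G.dist r r = D := h.2
            simp [SimpleGraph.dist_self] at hr0
            omega

theorem stmt_2 {V : Type} [Fintype V] (G : SimpleGraph V) (hG : G.Connected)
    (hn : 2 ≤ Fintype.card V) :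
    treeCoverNumber G ≤ (Fintype.card V + 1) / 2 := by
  obtain ⟨C, hC, hcard⟩ := aux_main (Fintype.card V) V G le_rfl hG
  have h1 : treeCoverNumber G ≤ C.card := Nat.sInf_le ⟨C, hC, rfl⟩
  omega
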